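/- arXiv:math/0104224 — 6 statements merged into one kernel-verified Lean document; each statement's English description precedes it below -/
import Mathlib

section
/- Let n ≥ 1 and let p, q, s be integers. The group presented by generators x_1, ..., x_{2n} and relators x_{2i-1}^q x_{2i}^{-1} x_{2i+1}^{-q} and x_{2i}^s x_{2i+1}^p x_{2i+2}^{-s} for i = 1, ..., n (subscripts mod 2n) is isomorphic to the group presented by generators z_1, ..., z_n and relators z_i^p (z_i^{-q} z_{i+1}^q)^s (z_i^{-q} z_{i-1}^q)^s for i = 1, ..., n (subscripts mod n). -/
namespace Stmt4Aux

variable {G : Type*} [Group G]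

lemma cyc_one {a b : G} (h : a * b = 1) : b * a = 1 := by
  rw [eq_inv_of_mul_eq_one_right h, inv_mul_cancel]

lemma hW (a c : G) (q s : ℤ) : (c^(-q) * a^q)^(-s) = (a^(-q) * c^q)^s := by
  have h1 : c^(-q) * a^q = (a^(-q) * c^q)⁻¹ := by
    rw [mul_inv_rev, ← zpow_neg, ← zpow_neg, neg_neg]
  rw [h1, zpow_neg, inv_zpow, inv_inv]

lemma keyA (a b c : G) (p q s : ℤ)
    (h : a^p * (a^(-q) * c^q)^s * (a^(-q) * b^q)^s = 1) :
    (a^(-q) * b^q)^s * a^p * (c^(-q) * a^q)^(-s) = 1 := by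
  rw [hW, mul_assoc]
  exact cyc_one h

lemma keyB (a b c : G) (p q s : ℤ)
    (h : (a^(-q) * b^q)^s * a^p * (c^(-q) * a^q)^(-s) = 1) :
    a^p * (a^(-q) * c^q)^s * (a^(-q) * b^q)^s = 1 := by
  rw [hW, mul_assoc] at h
  exact cyc_one h

lemma solveA (a b c : G) (q : ℤ) (h : a^q * b^(-1:ℤ) * c^(-q) = 1) :
    c^(-q) * a^q = b := by
  rw [zpow_neg_one] at h
  have h2 := cyc_one h
  rw [← mul_assoc] at h2
  have h3 := eq_inv_of_mul_eq_one_left h2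
  simpa using h3

lemma mk_of' {α : Type*} {rels : Set (FreeGroup α)} (a : α) :
    PresentedGroup.mk rels (FreeGroup.of a) = PresentedGroup.of a := rfl

lemma mk_rel_one' {α : Type*} {rels : Set (FreeGroup α)} {r : FreeGroup α} (h : r ∈ rels) :
    PresentedGroup.mk rels r = 1 :=
  (QuotientGroup.eq_one_iff _).2 (Subgroup.subset_normalClosure h)

/-- relator set 1 -/
def R1 (n : ℕ) (p q s : ℤ) : Set (FreeGroup (ZMod (2 * n))) :=
  (Set.range fun i : Fin n =>
    (FreeGroup.of (((2 * (i : ℕ) + 1 : ℕ) : ZMod (2 * n)))) ^ q *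
      (FreeGroup.of (((2 * (i : ℕ) + 2 : ℕ) : ZMod (2 * n)))) ^ (-1 : ℤ) *
      (FreeGroup.of (((2 * (i : ℕ) + 3 : ℕ) : ZMod (2 * n)))) ^ (-q)) ∪
  (Set.range fun i : Fin n =>
    (FreeGroup.of (((2 * (i : ℕ) + 2 : ℕ) : ZMod (2 * n)))) ^ s *
      (FreeGroup.of (((2 * (i : ℕ) + 3 : ℕ) : ZMod (2 * n)))) ^ p *
      (FreeGroup.of (((2 * (i : ℕ) + 4 : ℕ) : ZMod (2 * n)))) ^ (-s))

/-- relator set 2 -/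
def R2 (n : ℕ) (p q s : ℤ) : Set (FreeGroup (ZMod n)) :=
  Set.range fun i : ZMod n =>
    (FreeGroup.of i) ^ p * ((FreeGroup.of i) ^ (-q) * (FreeGroup.of (i + 1)) ^ q) ^ s *
      ((FreeGroup.of i) ^ (-q) * (FreeGroup.of (i - 1)) ^ q) ^ s

/-- generator map for the forward morphism -/
def gmap (n : ℕ) (p q s : ℤ) (a : ZMod (2 * n)) : PresentedGroup (R2 n p q s) :=
  if a.val % 2 = 1 then .of ((a.val / 2 : ℕ) : ZMod n)
  else (.of (((a.val / 2 : ℕ) : ZMod n)))^(-q) * (.of ((((a.val / 2 : ℕ) : ZMod n)) - 1))^q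

/-- generator map for the backward morphism -/
def hmap (n : ℕ) (p q s : ℤ) (j : ZMod n) : PresentedGroup (R1 n p q s) :=
  .of (((2 * j.val + 1 : ℕ) : ZMod (2 * n)))

section Main
variable (n : ℕ) (hn : 1 ≤ n) (p q s : ℤ)

lemma idx (k j : ℕ) : ((2 * (k % n) + j : ℕ) : ZMod (2 * n)) = ((2 * k + j : ℕ) : ZMod (2 * n)) := by
  rw [ZMod.natCast_eq_natCast_iff]
  exact ((Nat.mod_modEq k n).mul_left' (c := 2)).add_right j

include hn

lemma hval (k j : ℕ) (hj : j < 2) :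
    (((2 * k + j : ℕ) : ZMod (2 * n))).val = 2 * (k % n) + j := by
  haveI : NeZero (2 * n) := ⟨by omega⟩
  have hkn : k % n < n := Nat.mod_lt _ (by omega)
  have h1 : (2 * k) % (2 * n) = 2 * (k % n) := Nat.mul_mod_mul_left 2 k n
  rw [ZMod.val_natCast, Nat.add_mod, h1, Nat.mod_eq_of_lt (show j < 2 * n by omega),
    Nat.mod_eq_of_lt (by omega)]

lemma godd (k : ℕ) :
    gmap n p q s ((2 * k + 1 : ℕ) : ZMod (2 * n)) = .of ((k : ZMod n)) := by
  have hv := hval n hn k 1 (by omega)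
  rw [gmap, hv]
  have h1 : (2 * (k % n) + 1) % 2 = 1 := by omega
  have h2 : (2 * (k % n) + 1) / 2 = k % n := by omega
  rw [if_pos h1, h2, ZMod.natCast_mod]

lemma geven (k : ℕ) :
    gmap n p q s ((2 * k + 2 : ℕ) : ZMod (2 * n)) =
      (.of (((k + 1 : ℕ) : ZMod n)))^(-q) * (.of ((k : ZMod n)))^q := by
  have e : (2 * k + 2 : ℕ) = 2 * (k + 1) + 0 := by omega
  rw [e]
  have hv := hval n hn (k + 1) 0 (by omega)
  rw [gmap, hv]
  have h1 : ¬ ((2 * ((k + 1) % n) + 0) % 2 = 1) := by omega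
  have h2 : (2 * ((k + 1) % n) + 0) / 2 = (k + 1) % n := by omega
  rw [if_neg h1, h2, ZMod.natCast_mod]
  congr 2
  push_cast
  ring

omit hn in
lemma relB (j : ZMod n) :
    (PresentedGroup.of j : PresentedGroup (R2 n p q s)) ^ p *
      ((PresentedGroup.of j) ^ (-q) * (PresentedGroup.of (j + 1)) ^ q) ^ s *
      ((PresentedGroup.of j) ^ (-q) * (PresentedGroup.of (j - 1)) ^ q) ^ s = 1 := by
  have hm : ((FreeGroup.of j) ^ p * ((FreeGroup.of j) ^ (-q) * (FreeGroup.of (j + 1)) ^ q) ^ s *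
      ((FreeGroup.of j) ^ (-q) * (FreeGroup.of (j - 1)) ^ q) ^ s) ∈ R2 n p q s :=
    Set.mem_range_self j
  have h := mk_rel_one' hm
  simpa only [map_mul, map_zpow, mk_of'] using h

lemma relA1 (k : ℕ) :
    (PresentedGroup.of ((2 * k + 1 : ℕ) : ZMod (2 * n)) : PresentedGroup (R1 n p q s)) ^ q *
      (PresentedGroup.of ((2 * k + 2 : ℕ) : ZMod (2 * n))) ^ (-1 : ℤ) *
      (PresentedGroup.of ((2 * k + 3 : ℕ) : ZMod (2 * n))) ^ (-q) = 1 := by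
  have hkn : k % n < n := Nat.mod_lt _ (by omega)
  have hm := Set.mem_union_left
    (Set.range fun i : Fin n =>
      (FreeGroup.of (((2 * (i : ℕ) + 2 : ℕ) : ZMod (2 * n)))) ^ s *
        (FreeGroup.of (((2 * (i : ℕ) + 3 : ℕ) : ZMod (2 * n)))) ^ p *
        (FreeGroup.of (((2 * (i : ℕ) + 4 : ℕ) : ZMod (2 * n)))) ^ (-s))
    (Set.mem_range_self (f := fun i : Fin n =>
      (FreeGroup.of (((2 * (i : ℕ) + 1 : ℕ) : ZMod (2 * n)))) ^ q *
        (FreeGroup.of (((2 * (i : ℕ) + 2 : ℕ) : ZMod (2 * n)))) ^ (-1 : ℤ) *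
        (FreeGroup.of (((2 * (i : ℕ) + 3 : ℕ) : ZMod (2 * n)))) ^ (-q))
      (⟨k % n, hkn⟩ : Fin n))
  have h := mk_rel_one' (rels := R1 n p q s) hm
  simp only [map_mul, map_zpow, mk_of'] at h
  rw [idx n k 1, idx n k 2, idx n k 3] at h
  exact h

lemma relB1 (k : ℕ) :
    (PresentedGroup.of ((2 * k + 2 : ℕ) : ZMod (2 * n)) : PresentedGroup (R1 n p q s)) ^ s *
      (PresentedGroup.of ((2 * k + 3 : ℕ) : ZMod (2 * n))) ^ p *
      (PresentedGroup.of ((2 * k + 4 : ℕ) : ZMod (2 * n))) ^ (-s) = 1 := by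
  have hkn : k % n < n := Nat.mod_lt _ (by omega)
  have hm := Set.mem_union_right
    (Set.range fun i : Fin n =>
      (FreeGroup.of (((2 * (i : ℕ) + 1 : ℕ) : ZMod (2 * n)))) ^ q *
        (FreeGroup.of (((2 * (i : ℕ) + 2 : ℕ) : ZMod (2 * n)))) ^ (-1 : ℤ) *
        (FreeGroup.of (((2 * (i : ℕ) + 3 : ℕ) : ZMod (2 * n)))) ^ (-q))
    (Set.mem_range_self (f := fun i : Fin n =>
      (FreeGroup.of (((2 * (i : ℕ) + 2 : ℕ) : ZMod (2 * n)))) ^ s *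
        (FreeGroup.of (((2 * (i : ℕ) + 3 : ℕ) : ZMod (2 * n)))) ^ p *
        (FreeGroup.of (((2 * (i : ℕ) + 4 : ℕ) : ZMod (2 * n)))) ^ (-s))
      (⟨k % n, hkn⟩ : Fin n))
  have h := mk_rel_one' (rels := R1 n p q s) hm
  simp only [map_mul, map_zpow, mk_of'] at h
  rw [idx n k 2, idx n k 3, idx n k 4] at h
  exact h

/-- substituting x_{2k+2} = x_{2k+3}^{-q} x_{2k+1}^q into the second family -/
lemma relD (k : ℕ) :
    ((PresentedGroup.of ((2 * k + 3 : ℕ) : ZMod (2 * n)) : PresentedGroup (R1 n p q s)) ^ (-q) *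
        (PresentedGroup.of ((2 * k + 1 : ℕ) : ZMod (2 * n))) ^ q) ^ s *
      (PresentedGroup.of ((2 * k + 3 : ℕ) : ZMod (2 * n))) ^ p *
      ((PresentedGroup.of ((2 * k + 5 : ℕ) : ZMod (2 * n))) ^ (-q) *
        (PresentedGroup.of ((2 * k + 3 : ℕ) : ZMod (2 * n))) ^ q) ^ (-s) = 1 := by
  have hA := solveA _ _ _ q (relA1 n hn p q s k)
  have hA2 := solveA _ _ _ q (relA1 n hn p q s (k + 1))
  rw [show 2 * (k + 1) + 1 = 2 * k + 3 from by ring, show 2 * (k + 1) + 2 = 2 * k + 4 from by ring,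
    show 2 * (k + 1) + 3 = 2 * k + 5 from by ring] at hA2
  have hB := relB1 n hn p q s k
  rw [← hA, ← hA2] at hB
  rw [hW] at hB ⊢
  exact hB

lemma hmap_cast (m : ℕ) :
    hmap n p q s ((m : ZMod n)) = .of ((2 * m + 1 : ℕ) : ZMod (2 * n)) := by
  haveI : NeZero n := ⟨by omega⟩
  rw [hmap, ZMod.val_natCast]
  exact congrArg _ (idx n m 1)

lemma hF : ∀ r ∈ R1 n p q s, FreeGroup.lift (gmap n p q s) r = 1 := by
  intro r hr
  rcases hr with ⟨i, rfl⟩ | ⟨i, rfl⟩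
  · simp only [map_mul, map_zpow, FreeGroup.lift_apply_of]
    rw [godd n hn p q s i, geven n hn p q s i,
      show 2 * (i : ℕ) + 3 = 2 * ((i : ℕ) + 1) + 1 from by ring, godd n hn p q s ((i : ℕ) + 1)]
    group
  · simp only [map_mul, map_zpow, FreeGroup.lift_apply_of]
    rw [geven n hn p q s i,
      show 2 * (i : ℕ) + 3 = 2 * ((i : ℕ) + 1) + 1 from by ring, godd n hn p q s ((i : ℕ) + 1),
      show 2 * (i : ℕ) + 4 = 2 * ((i : ℕ) + 1) + 2 from by ring, geven n hn p q s ((i : ℕ) + 1)]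
    apply keyA
    have hB := relB n p q s ((((i : ℕ) + 1 : ℕ)) : ZMod n)
    have e1 : ((((i : ℕ) + 1 : ℕ)) : ZMod n) + 1 = (((((i : ℕ) + 1) + 1 : ℕ)) : ZMod n) := by
      push_cast; ring
    have e2 : ((((i : ℕ) + 1 : ℕ)) : ZMod n) - 1 = (((i : ℕ) : ℕ) : ZMod n) := by
      push_cast; ring
    rw [e1, e2] at hB
    exact hB

lemma hH : ∀ r ∈ R2 n p q s, FreeGroup.lift (hmap n p q s) r = 1 := by
  intro r hr
  obtain ⟨j, rfl⟩ := hr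
  haveI : NeZero n := ⟨by omega⟩
  simp only [map_mul, map_zpow, FreeGroup.lift_apply_of]
  obtain ⟨k, rfl⟩ : ∃ k : ℕ, j = (k : ZMod n) := ⟨j.val, (ZMod.natCast_rightInverse j).symm⟩
  have e1 : (k : ZMod n) + 1 = ((k + 1 : ℕ) : ZMod n) := by push_cast; ring
  have e2 : (k : ZMod n) - 1 = ((k + n - 1 : ℕ) : ZMod n) := by
    rw [show (k + n - 1 : ℕ) = k + (n - 1) from by omega, Nat.cast_add]
    have h6 : ((n - 1 : ℕ) : ZMod n) + 1 = 0 := by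
      rw [show (1 : ZMod n) = ((1 : ℕ) : ZMod n) from (Nat.cast_one).symm, ← Nat.cast_add,
        show n - 1 + 1 = n from by omega, ZMod.natCast_self]
    rw [eq_neg_of_add_eq_zero_left h6]
    ring
  rw [e1, e2, hmap_cast n hn p q s k, hmap_cast n hn p q s (k + 1),
    hmap_cast n hn p q s (k + n - 1)]
  apply keyB
  have hD := relD n hn p q s (k + n - 1)
  have c1 : ((2 * (k + n - 1) + 3 : ℕ) : ZMod (2 * n)) = ((2 * k + 1 : ℕ) : ZMod (2 * n)) := by
    rw [show 2 * (k + n - 1) + 3 = 2 * n + (2 * k + 1) from by omega, Nat.cast_add,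
      ZMod.natCast_self, zero_add]
  have c2 : ((2 * (k + n - 1) + 5 : ℕ) : ZMod (2 * n)) =
      ((2 * (k + 1) + 1 : ℕ) : ZMod (2 * n)) := by
    rw [show 2 * (k + n - 1) + 5 = 2 * n + (2 * (k + 1) + 1) from by omega, Nat.cast_add,
      ZMod.natCast_self, zero_add]
  rw [c1, c2] at hD
  exact hD

/-- forward hom -/
def Fhom : PresentedGroup (R1 n p q s) →* PresentedGroup (R2 n p q s) :=
  PresentedGroup.toGroup (hF n hn p q s)

/-- backward hom -/
def Hhom : PresentedGroup (R2 n p q s) →* PresentedGroup (R1 n p q s) :=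
  PresentedGroup.toGroup (hH n hn p q s)

lemma Fhom_of (a : ZMod (2 * n)) : Fhom n hn p q s (.of a) = gmap n p q s a :=
  PresentedGroup.toGroup.of _

lemma Hhom_of (j : ZMod n) : Hhom n hn p q s (.of j) = hmap n p q s j :=
  PresentedGroup.toGroup.of _

theorem main : Nonempty (PresentedGroup (R1 n p q s) ≃* PresentedGroup (R2 n p q s)) := by
  haveI : NeZero n := ⟨by omega⟩
  haveI : NeZero (2 * n) := ⟨by omega⟩
  have hHF : ∀ a : ZMod (2 * n),
      Hhom n hn p q s (Fhom n hn p q s (.of a)) = .of a := by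
    intro a
    have ha : ((a.val : ℕ) : ZMod (2 * n)) = a := ZMod.natCast_rightInverse a
    rcases Nat.even_or_odd a.val with ⟨k, hk⟩ | ⟨k, hk⟩
    · have hk2 : a.val = 2 * k := by omega
      have ham : ((2 * (k + n - 1) + 2 : ℕ) : ZMod (2 * n)) = a := by
        rw [show 2 * (k + n - 1) + 2 = 2 * n + 2 * k from by omega, Nat.cast_add,
          ZMod.natCast_self, zero_add, ← hk2]
        exact ha
      rw [← ham, Fhom_of, geven n hn p q s (k + n - 1), map_mul, map_zpow, map_zpow,
        Hhom_of, Hhom_of, hmap_cast n hn p q s (k + n - 1 + 1), hmap_cast n hn p q s (k + n - 1),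
        show 2 * (k + n - 1 + 1) + 1 = 2 * (k + n - 1) + 3 from by ring]
      exact solveA _ _ _ q (relA1 n hn p q s (k + n - 1))
    · have hk2 : a.val = 2 * k + 1 := by omega
      have ham : ((2 * k + 1 : ℕ) : ZMod (2 * n)) = a := by rw [← hk2]; exact ha
      rw [← ham, Fhom_of, godd n hn p q s k, Hhom_of, hmap_cast n hn p q s k]
  have hFH : ∀ j : ZMod n, Fhom n hn p q s (Hhom n hn p q s (.of j)) = .of j := by
    intro j
    rw [Hhom_of, hmap, Fhom_of, godd n hn p q s j.val]
    exact congrArg _ (ZMod.natCast_rightInverse j)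
  have h1 : (Hhom n hn p q s).comp (Fhom n hn p q s) = MonoidHom.id _ :=
    PresentedGroup.ext fun a => by simpa using hHF a
  have h2 : (Fhom n hn p q s).comp (Hhom n hn p q s) = MonoidHom.id _ :=
    PresentedGroup.ext fun j => by simpa using hFH j
  exact ⟨{ toFun := Fhom n hn p q s, invFun := Hhom n hn p q s,
           left_inv := fun x => by simpa using DFunLike.congr_fun h1 x,
           right_inv := fun x => by simpa using DFunLike.congr_fun h2 x,
           map_mul' := map_mul _ }⟩

end Main
end Stmt4Aux

/-- The geometric presentation of π₁(Mₙ(p/q, 1/s)) with 2n generators is isomorphic to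
the cyclic presentation (1) with n generators. -/
theorem stmt_4 (n : ℕ) (hn : 1 ≤ n) (p q s : ℤ) :
    let c : ℕ → ZMod (2 * n) := Nat.cast
    let rels1 : Set (FreeGroup (ZMod (2 * n))) :=
      (Set.range fun i : Fin n =>
        (FreeGroup.of (c (2 * (i : ℕ) + 1))) ^ q * (FreeGroup.of (c (2 * (i : ℕ) + 2))) ^ (-1 : ℤ) *
          (FreeGroup.of (c (2 * (i : ℕ) + 3))) ^ (-q)) ∪
      (Set.range fun i : Fin n =>
        (FreeGroup.of (c (2 * (i : ℕ) + 2))) ^ s * (FreeGroup.of (c (2 * (i : ℕ) + 3))) ^ p *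
          (FreeGroup.of (c (2 * (i : ℕ) + 4))) ^ (-s))
    let rels2 : Set (FreeGroup (ZMod n)) :=
      Set.range fun i : ZMod n =>
        (FreeGroup.of i) ^ p * ((FreeGroup.of i) ^ (-q) * (FreeGroup.of (i + 1)) ^ q) ^ s *
          ((FreeGroup.of i) ^ (-q) * (FreeGroup.of (i - 1)) ^ q) ^ s
    Nonempty (PresentedGroup rels1 ≃* PresentedGroup rels2) := by
  intro c rels1 rels2
  exact Stmt4Aux.main n hn p q s
end

section
/- Let q, s be integers with 4sq ≠ 1. The abelianization of the group presented by generators z_1, z_2 and relators z_1 (z_1^{-q} z_2^q)^{2s} and z_2 (z_2^{-q} z_1^q)^{2s} is a finite abelian group of order |1 - 4sq|. -/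
/-- H₁ of M₂(1/q, 1/s): the abelianization of the cyclic presentation with n = 2, p = 1
is finite of order |1 - 4sq|. -/
theorem stmt_7 (q s : ℤ) (h : 4 * s * q ≠ 1) :
    let z : Fin 2 → FreeGroup (Fin 2) := FreeGroup.of
    let rels : Set (FreeGroup (Fin 2)) :=
      { z 0 * ((z 0) ^ (-q) * (z 1) ^ q) ^ (2 * s),
        z 1 * ((z 1) ^ (-q) * (z 0) ^ q) ^ (2 * s) }
    Finite (Abelianization (PresentedGroup rels)) ∧
      Nat.card (Abelianization (PresentedGroup rels)) = (1 - 4 * s * q).natAbs := by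
  intro z rels
  set n : ℕ := (1 - 4 * s * q).natAbs with hn
  have hd : (1 - 4 * s * q) ≠ 0 := by omega
  haveI : NeZero n := ⟨by simpa [hn] using hd⟩
  have key : ((1 - 4 * s * q : ℤ) : ZMod n) = 0 := by
    rw [ZMod.intCast_zmod_eq_zero_iff_dvd]
    exact Int.natAbs_dvd.mpr dvd_rfl
  -- the map to ZMod n
  set f : Fin 2 → Multiplicative (ZMod n) :=
    ![Multiplicative.ofAdd 1, Multiplicative.ofAdd (-1)] with hfdef
  have hf : ∀ r ∈ rels, FreeGroup.lift f r = 1 := by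
    intro r hr
    rcases hr with hr | hr <;> subst hr <;>
    · simp only [z, map_mul, map_zpow, FreeGroup.lift_apply_of, hfdef, Matrix.cons_val_zero,
        Matrix.cons_val_one, Matrix.head_cons]
      rw [← ofAdd_zero]
      simp only [← ofAdd_zsmul, ← ofAdd_add]
      congr 1
      simp only [zsmul_eq_mul, smul_eq_mul]
      push_cast
      push_cast at key
      first
        | linear_combination key
        | linear_combination -key
        | linear_combination 2*key
        | linear_combination -2*key
  -- relations in the abelianization
  set Ab := Abelianization (PresentedGroup rels)
  set A : Ab := Abelianization.of (PresentedGroup.mk rels (z 0)) with hA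
  set B : Ab := Abelianization.of (PresentedGroup.mk rels (z 1)) with hB
  have hrel : ∀ r ∈ rels, Abelianization.of (PresentedGroup.mk rels r) = 1 := by
    intro r hr
    have : PresentedGroup.mk rels r = 1 :=
      (QuotientGroup.eq_one_iff r).mpr (Subgroup.subset_normalClosure hr)
    rw [this, map_one]
  have hr1 : A * (A ^ (-q) * B ^ q) ^ (2 * s) = 1 := by
    have := hrel _ (Set.mem_insert _ _)
    simpa only [map_mul, map_zpow] using this
  have hr2 : B * (B ^ (-q) * A ^ q) ^ (2 * s) = 1 := by
    have := hrel _ (Set.mem_insert_of_mem _ rfl)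
    simpa only [map_mul, map_zpow] using this
  -- additive versions
  set a : Additive Ab := Additive.ofMul A with ha
  set b : Additive Ab := Additive.ofMul B with hb
  have ha1 : a + (2 * s) • ((-q) • a + q • b) = 0 := by
    have := congrArg Additive.ofMul hr1
    simpa only [ofMul_mul, ofMul_zpow, ofMul_one] using this
  have ha2 : b + (2 * s) • ((-q) • b + q • a) = 0 := by
    have := congrArg Additive.ofMul hr2
    simpa only [ofMul_mul, ofMul_zpow, ofMul_one] using this
  have hba : b = -a := by
    have hsum : a + b = 0 := by
      linear_combination (norm := module) ha1 + ha2
    linear_combination (norm := module) hsum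
  have hpow : (1 - 4 * s * q) • a = 0 := by
    rw [hba] at ha1
    linear_combination (norm := module) ha1
  -- n • a = 0
  have hpown : (n : ℤ) • a = 0 := by
    rcases Int.natAbs_eq (1 - 4 * s * q) with he | he
    · rw [← he]; exact hpow
    · have : -((n : ℤ) • a) = 0 := by rw [← neg_smul, ← he]; exact hpow
      simpa using this
  have hg0 : (zmultiplesHom (Additive Ab) a) (n : ℤ) = 0 := by
    simpa using hpown
  set g : ZMod n →+ Additive Ab := ZMod.lift n ⟨zmultiplesHom (Additive Ab) a, hg0⟩ with hg
  set G' : Multiplicative (ZMod n) →* Ab := AddMonoidHom.toMultiplicativeLeft g with hG'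
  set F' : Ab →* Multiplicative (ZMod n) :=
    Abelianization.lift (PresentedGroup.toGroup hf) with hF'
  have hFA : F' A = Multiplicative.ofAdd (1 : ZMod n) := by
    rw [hA]
    show F' (Abelianization.of (PresentedGroup.of 0)) = _
    rw [hF', Abelianization.lift_apply_of, PresentedGroup.toGroup.of]
    simp [hfdef]
  have hFB : F' B = Multiplicative.ofAdd (-1 : ZMod n) := by
    rw [hB]
    show F' (Abelianization.of (PresentedGroup.of 1)) = _
    rw [hF', Abelianization.lift_apply_of, PresentedGroup.toGroup.of]
    simp [hfdef]
  have hGk : ∀ k : ℤ, G' (Multiplicative.ofAdd ((k : ZMod n))) = A ^ k := by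
    intro k
    rw [hG']
    show Multiplicative.toAdd.symm (g ((k : ZMod n))) = A ^ k
    rw [hg, ZMod.lift_coe]
    show Multiplicative.toAdd.symm ((zmultiplesHom (Additive Ab) a) k) = A ^ k
    simp [zmultiplesHom_apply, ha, ← ofMul_zpow]
    rfl
  -- right inverse
  have hright : Function.RightInverse G' F' := by
    intro y
    obtain ⟨x, rfl⟩ : ∃ x : ZMod n, Multiplicative.ofAdd x = y :=
      ⟨Multiplicative.toAdd y, rfl⟩
    obtain ⟨k, rfl⟩ := ZMod.intCast_surjective x
    rw [hGk, map_zpow, hFA, ← ofAdd_zsmul]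
    congr 1
    simp
  -- left inverse
  have hleft : Function.LeftInverse G' F' := by
    have : G'.comp F' = MonoidHom.id Ab := by
      apply Abelianization.hom_ext
      apply PresentedGroup.ext
      intro x
      fin_cases x
      · show G' (F' A) = A
        rw [hFA]
        have := hGk 1
        simpa using this
      · show G' (F' B) = B
        rw [hFB]
        have h1 : ((-1 : ℤ) : ZMod n) = (-1 : ZMod n) := by push_cast; ring
        rw [← h1, hGk, zpow_neg_one]
        have hBA : B = A⁻¹ := by
          have := congrArg Additive.toMul hba
          exact this
        rw [hBA]
    intro x
    exact DFunLike.congr_fun this x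
  -- conclude
  have e : Ab ≃* Multiplicative (ZMod n) :=
    MulEquiv.ofBijective F' ⟨hleft.injective, hright.surjective⟩
  constructor
  · exact Finite.of_equiv _ e.symm.toEquiv
  · rw [Nat.card_congr e.toEquiv, Nat.card_congr Multiplicative.toAdd, Nat.card_zmod]
end

section
/- The abelianization of the group presented by six generators x_1, ..., x_6 and six relators x_{2i-1} x_{2i}^3 x_{2i+1}^{-1} and x_{2i} x_{2i+1}^3 x_{2i+2}^{-1} for i = 1, 2, 3 (subscripts mod 6) is a finite group of order 1296. -/
namespace Stmt8Aux

def rels8 : Set (FreeGroup (ZMod 6)) :=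
  (Set.range fun i : Fin 3 =>
    FreeGroup.of (((2 * (i : ℕ) + 1 : ℕ)) : ZMod 6) *
      (FreeGroup.of (((2 * (i : ℕ) + 2 : ℕ)) : ZMod 6)) ^ (3 : ℤ) *
      (FreeGroup.of (((2 * (i : ℕ) + 3 : ℕ)) : ZMod 6))⁻¹) ∪
  (Set.range fun i : Fin 3 =>
    FreeGroup.of (((2 * (i : ℕ) + 2 : ℕ)) : ZMod 6) *
      (FreeGroup.of (((2 * (i : ℕ) + 3 : ℕ)) : ZMod 6)) ^ (3 : ℤ) *
      (FreeGroup.of (((2 * (i : ℕ) + 4 : ℕ)) : ZMod 6))⁻¹)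

abbrev P := PresentedGroup rels8
abbrev Ab := Abelianization P

def y (k : ZMod 6) : Ab := Abelianization.of (PresentedGroup.of k)
def z (k : ZMod 6) : Additive Ab := Additive.ofMul (y k)

lemma rel_one {r : FreeGroup (ZMod 6)} (h : r ∈ rels8) : (QuotientGroup.mk r : P) = 1 := by
  rw [QuotientGroup.eq_one_iff]
  exact Subgroup.subset_normalClosure h

lemma yrel {a b cc : ZMod 6}
    (h : FreeGroup.of a * (FreeGroup.of b) ^ (3:ℤ) * (FreeGroup.of cc)⁻¹ ∈ rels8) :
    z cc = z a + (3:ℤ) • z b := by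
  have h1 : (PresentedGroup.of (rels := rels8) a) * (PresentedGroup.of b) ^ (3:ℤ) *
      (PresentedGroup.of cc)⁻¹ = 1 := by
    exact rel_one h
  have h2 : y a * y b ^ (3:ℤ) * (y cc)⁻¹ = 1 := by
    have := congrArg (Abelianization.of (G := P)) h1
    simpa [y] using this
  have h3 : y cc = y a * y b ^ (3:ℤ) := (mul_inv_eq_one.mp h2).symm
  rw [z, z, z, h3, ofMul_mul, ofMul_zpow]


lemma zrel1 (i : Fin 3) :
    z (((2 * (i : ℕ) + 3 : ℕ)) : ZMod 6) =
      z (((2 * (i : ℕ) + 1 : ℕ)) : ZMod 6) + (3:ℤ) • z (((2 * (i : ℕ) + 2 : ℕ)) : ZMod 6) :=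
  yrel (Or.inl ⟨i, rfl⟩)

lemma zrel2 (i : Fin 3) :
    z (((2 * (i : ℕ) + 4 : ℕ)) : ZMod 6) =
      z (((2 * (i : ℕ) + 2 : ℕ)) : ZMod 6) + (3:ℤ) • z (((2 * (i : ℕ) + 3 : ℕ)) : ZMod 6) :=
  yrel (Or.inr ⟨i, rfl⟩)

lemma r123 : z 3 = z 1 + (3:ℤ) • z 2 := by simpa using zrel1 0
lemma r345 : z 5 = z 3 + (3:ℤ) • z 4 := by simpa using zrel1 1
lemma r501 : z 1 = z 5 + (3:ℤ) • z 0 := by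
  have := zrel1 2
  norm_num at this
  rwa [show (7 : ZMod 6) = 1 from by decide, show (6 : ZMod 6) = 0 from by decide] at this
lemma r234 : z 4 = z 2 + (3:ℤ) • z 3 := by simpa using zrel2 0
lemma r450 : z 0 = z 4 + (3:ℤ) • z 5 := by
  have := zrel2 1
  norm_num at this
  rwa [show (6 : ZMod 6) = 0 from by decide] at this
lemma r012 : z 2 = z 0 + (3:ℤ) • z 1 := by
  have := zrel2 2
  norm_num at this
  rwa [show (6 : ZMod 6) = 0 from by decide, show (7 : ZMod 6) = 1 from by decide,
    show (8 : ZMod 6) = 2 from by decide] at this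


lemma E4 : z 4 = (3:ℤ) • z 1 + (10:ℤ) • z 2 := by
  rw [r234, r123]; module
lemma E5 : z 5 = (10:ℤ) • z 1 + (33:ℤ) • z 2 := by
  rw [r345, E4, r123]; module
lemma E0 : z 0 = (33:ℤ) • z 1 + (109:ℤ) • z 2 := by
  rw [r450, E4, E5]; module
lemma H1 : (108:ℤ) • z 1 + (360:ℤ) • z 2 = 0 := by
  have h := r501
  rw [E5, E0] at h
  calc (108:ℤ) • z 1 + (360:ℤ) • z 2
      = ((10:ℤ) • z 1 + (33:ℤ) • z 2 + (3:ℤ) • ((33:ℤ) • z 1 + (109:ℤ) • z 2)) - z 1 := by module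
    _ = z 1 - z 1 := by rw [← h]
    _ = 0 := sub_self _
lemma H2 : (36:ℤ) • z 1 + (108:ℤ) • z 2 = 0 := by
  have h := r012
  rw [E0] at h
  calc (36:ℤ) • z 1 + (108:ℤ) • z 2
      = ((33:ℤ) • z 1 + (109:ℤ) • z 2 + (3:ℤ) • z 1) - z 2 := by module
    _ = z 2 - z 2 := by rw [← h]
    _ = 0 := sub_self _
lemma Hb : (36:ℤ) • z 2 = 0 := by
  have h3 : (108:ℤ) • z 1 + (324:ℤ) • z 2 = 0 := by
    calc (108:ℤ) • z 1 + (324:ℤ) • z 2 = (3:ℤ) • ((36:ℤ) • z 1 + (108:ℤ) • z 2) := by module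
      _ = 0 := by rw [H2, smul_zero]
  calc (36:ℤ) • z 2
      = ((108:ℤ) • z 1 + (360:ℤ) • z 2) - ((108:ℤ) • z 1 + (324:ℤ) • z 2) := by module
    _ = 0 := by rw [H1, h3, sub_zero]
lemma Ha : (36:ℤ) • z 1 = 0 := by
  calc (36:ℤ) • z 1
      = ((36:ℤ) • z 1 + (108:ℤ) • z 2) - (3:ℤ) • ((36:ℤ) • z 2) := by module
    _ = 0 := by rw [H2, Hb, smul_zero, sub_zero]
lemma E0' : z 0 = (33:ℤ) • z 1 + (1:ℤ) • z 2 := by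
  calc z 0 = (33:ℤ) • z 1 + (109:ℤ) • z 2 := E0
    _ = ((33:ℤ) • z 1 + (1:ℤ) • z 2) + (3:ℤ) • ((36:ℤ) • z 2) := by module
    _ = (33:ℤ) • z 1 + (1:ℤ) • z 2 := by rw [Hb, smul_zero, add_zero]


abbrev T := ZMod 36 × ZMod 36

def V : ZMod 6 → T :=
  ![(33,1),(1,0),(0,1),(1,3),(3,10),(10,33)]

def f8 : ZMod 6 → Multiplicative T := fun k => Multiplicative.ofAdd (V k)

lemma frel : ∀ r ∈ rels8, FreeGroup.lift f8 r = 1 := by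
  rintro r (⟨i, rfl⟩ | ⟨i, rfl⟩) <;> fin_cases i <;>
    · simp only [map_mul, map_zpow, map_inv, FreeGroup.lift_apply_of]
      decide

def φ0 : P →* Multiplicative T := PresentedGroup.toGroup frel

def φ : Ab →* Multiplicative T := Abelianization.lift φ0

lemma φ_y (k : ZMod 6) : φ (y k) = Multiplicative.ofAdd (V k) := by
  simp [φ, y, φ0, Abelianization.lift_apply_of, PresentedGroup.toGroup.of, f8]

def ψ1 : ZMod 36 →+ Additive Ab := ZMod.lift 36 ⟨zmultiplesHom _ (z 1), Ha⟩
def ψ2 : ZMod 36 →+ Additive Ab := ZMod.lift 36 ⟨zmultiplesHom _ (z 2), Hb⟩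

def ψadd : T →+ Additive Ab :=
  ψ1.comp (AddMonoidHom.fst _ _) + ψ2.comp (AddMonoidHom.snd _ _)

def ψ : Multiplicative T →* Ab := AddMonoidHom.toMultiplicativeLeft ψadd

lemma ψ_apply (m n : ℤ) :
    ψ (Multiplicative.ofAdd ((m : ZMod 36), (n : ZMod 36))) = y 1 ^ m * y 2 ^ n := by
  show ((ψadd ((m : ZMod 36), (n : ZMod 36)) : Additive Ab)).toMul = _
  have : ψadd ((m : ZMod 36), (n : ZMod 36)) = m • z 1 + n • z 2 := by
    show ψ1 (m : ZMod 36) + ψ2 (n : ZMod 36) = _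
    rw [ψ1, ψ2, ZMod.lift_coe, ZMod.lift_coe]
    rfl
  rw [this, toMul_add, toMul_zsmul, toMul_zsmul]
  rfl


lemma Z1 : z 1 = (1:ℤ) • z 1 + (0:ℤ) • z 2 := by module
lemma Z2 : z 2 = (0:ℤ) • z 1 + (1:ℤ) • z 2 := by module
lemma Z3 : z 3 = (1:ℤ) • z 1 + (3:ℤ) • z 2 := by rw [r123]; module

lemma key0 (k : ZMod 6) (a b : ℤ)
    (hV : V k = (((a:ℤ) : ZMod 36), ((b:ℤ) : ZMod 36)))
    (hz : z k = a • z 1 + b • z 2) :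
    ψ (Multiplicative.ofAdd (V k)) = y k := by
  rw [hV, ψ_apply]
  have : Additive.ofMul (y 1 ^ a * y 2 ^ b) = Additive.ofMul (y k) := by
    rw [ofMul_mul, ofMul_zpow, ofMul_zpow]
    exact hz.symm
  exact Additive.ofMul.injective this

lemma key (k : ZMod 6) : ψ (Multiplicative.ofAdd (V k)) = y k := by
  fin_cases k
  · exact key0 0 33 1 (by decide) E0'
  · exact key0 1 1 0 (by decide) Z1
  · exact key0 2 0 1 (by decide) Z2
  · exact key0 3 1 3 (by decide) Z3
  · exact key0 4 3 10 (by decide) E4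
  · exact key0 5 10 33 (by decide) E5

lemma hψφ : ψ.comp φ = MonoidHom.id Ab := by
  apply Abelianization.hom_ext
  apply PresentedGroup.ext
  intro k
  show ψ (φ (y k)) = y k
  rw [φ_y]
  exact key k

lemma hφψ : φ.comp ψ = MonoidHom.id (Multiplicative T) := by
  refine MonoidHom.ext fun p => ?_
  obtain ⟨m, hm⟩ := ZMod.intCast_surjective (p.toAdd.1)
  obtain ⟨n, hn⟩ := ZMod.intCast_surjective (p.toAdd.2)
  have hp : p = Multiplicative.ofAdd (((m : ZMod 36), (n : ZMod 36)) : T) := by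
    rw [hm, hn, Prod.mk.eta]; rfl
  rw [hp]
  show φ (ψ (Multiplicative.ofAdd ((m : ZMod 36), (n : ZMod 36)))) = _
  rw [ψ_apply, map_mul, map_zpow, map_zpow, φ_y, φ_y]
  have h1 : (Multiplicative.ofAdd (V 1)) ^ m = Multiplicative.ofAdd (m • V 1) :=
    (ofAdd_zsmul _ _).symm
  have h2 : (Multiplicative.ofAdd (V 2)) ^ n = Multiplicative.ofAdd (n • V 2) :=
    (ofAdd_zsmul _ _).symm
  have hV1 : V 1 = ((1 : ZMod 36), (0 : ZMod 36)) := by decide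
  have hV2 : V 2 = ((0 : ZMod 36), (1 : ZMod 36)) := by decide
  have hsum : m • V 1 + n • V 2 = (((m : ZMod 36), (n : ZMod 36)) : T) := by
    rw [hV1, hV2]
    simp [Prod.ext_iff, zsmul_eq_mul]
  rw [h1, h2, ← ofAdd_add, hsum]
  rfl

def e8 : Ab ≃* Multiplicative T := MonoidHom.toMulEquiv φ ψ hψφ hφψ


end Stmt8Aux

/-- |H₁(M₃(3,-3))| = 1296: the abelianization of the geometric presentation with
n = 3, p = 3, q = 1, r = -3, s = 1 is finite of order 1296. -/
theorem stmt_8 :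
    let c : ℕ → ZMod 6 := Nat.cast
    let x : ZMod 6 → FreeGroup (ZMod 6) := FreeGroup.of
    let rels : Set (FreeGroup (ZMod 6)) :=
      (Set.range fun i : Fin 3 =>
        x (c (2 * (i : ℕ) + 1)) * (x (c (2 * (i : ℕ) + 2))) ^ (3 : ℤ) *
          (x (c (2 * (i : ℕ) + 3)))⁻¹) ∪
      (Set.range fun i : Fin 3 =>
        x (c (2 * (i : ℕ) + 2)) * (x (c (2 * (i : ℕ) + 3))) ^ (3 : ℤ) *
          (x (c (2 * (i : ℕ) + 4)))⁻¹)
    Finite (Abelianization (PresentedGroup rels)) ∧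
      Nat.card (Abelianization (PresentedGroup rels)) = 1296 := by
  intro c x rels
  have e : Abelianization (PresentedGroup rels) ≃* Multiplicative Stmt8Aux.T := Stmt8Aux.e8
  constructor
  · exact Finite.of_equiv _ e.symm.toEquiv
  · rw [Nat.card_congr e.toEquiv]
    simp [Nat.card_eq_fintype_card, ZMod.card]
end

section
/- The abelianization of the group presented by eight generators x_1, ..., x_8 and eight relators x_{2i-1}^2 x_{2i}^{-1} x_{2i+1}^{-2} and x_{2i} x_{2i+1}^3 x_{2i+2}^{-1} for i = 1, 2, 3, 4 (subscripts mod 8) is a finite group of order 15. -/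
private def myRels : Set (FreeGroup (ZMod 8)) :=
  (Set.range fun i : Fin 4 =>
    (FreeGroup.of (((2 * (i : ℕ) + 1 : ℕ)) : ZMod 8)) ^ (2 : ℤ) *
      (FreeGroup.of (((2 * (i : ℕ) + 2 : ℕ)) : ZMod 8))⁻¹ *
      (FreeGroup.of (((2 * (i : ℕ) + 3 : ℕ)) : ZMod 8)) ^ (-2 : ℤ)) ∪
  (Set.range fun i : Fin 4 =>
    FreeGroup.of (((2 * (i : ℕ) + 2 : ℕ)) : ZMod 8) *
      (FreeGroup.of (((2 * (i : ℕ) + 3 : ℕ)) : ZMod 8)) ^ (3 : ℤ) *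
      (FreeGroup.of (((2 * (i : ℕ) + 4 : ℕ)) : ZMod 8))⁻¹)

private def vv : ZMod 8 → ZMod 15 := fun j => ![9, 4, 6, 1, 9, 4, 6, 1] j

private lemma lem1 {A : Type*} [CommGroup A] (u v w : A)
    (h : u ^ (2 : ℤ) * v⁻¹ * w ^ (-2 : ℤ) = 1) :
    (2 : ℤ) • Additive.ofMul u - Additive.ofMul v - (2 : ℤ) • Additive.ofMul w = 0 := by
  have := congrArg Additive.ofMul h
  simp only [ofMul_mul, ofMul_zpow, ofMul_inv, ofMul_one] at this
  linear_combination (norm := module) this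

private lemma lem2 {A : Type*} [CommGroup A] (u v w : A)
    (h : u * v ^ (3 : ℤ) * w⁻¹ = 1) :
    Additive.ofMul u + (3 : ℤ) • Additive.ofMul v - Additive.ofMul w = 0 := by
  have := congrArg Additive.ofMul h
  simp only [ofMul_mul, ofMul_zpow, ofMul_inv, ofMul_one] at this
  linear_combination (norm := module) this

private theorem aux : Finite (Abelianization (PresentedGroup myRels)) ∧
    Nat.card (Abelianization (PresentedGroup myRels)) = 15 := by
  classical
  have hv : ∀ r ∈ myRels, FreeGroup.lift (fun j => Multiplicative.ofAdd (vv j)) r = 1 := by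
    rintro r (⟨i, rfl⟩ | ⟨i, rfl⟩) <;> fin_cases i <;>
      · simp only [map_mul, map_zpow, map_inv, FreeGroup.lift_apply_of]
        decide
  set A := Abelianization (PresentedGroup myRels) with hAdef
  let F : FreeGroup (ZMod 8) →* A :=
    (Abelianization.of).comp (PresentedGroup.mk myRels)
  have hrel : ∀ r ∈ myRels, F r = 1 := by
    intro r hr
    show Abelianization.of (PresentedGroup.mk myRels r) = 1
    rw [show PresentedGroup.mk myRels r = 1 from
      (QuotientGroup.eq_one_iff _).2 (Subgroup.subset_normalClosure hr), map_one]
  let bz : ZMod 8 → Additive A := fun j => Additive.ofMul (F (FreeGroup.of j))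
  -- the eight abelianized relations
  have h1 := lem1 _ _ _ (by
    have h := hrel _ (Or.inl ⟨(0 : Fin 4), rfl⟩)
    rw [map_mul, map_mul, map_zpow, map_inv, map_zpow] at h
    exact h)
  have h2 := lem1 _ _ _ (by
    have h := hrel _ (Or.inl ⟨(1 : Fin 4), rfl⟩)
    rw [map_mul, map_mul, map_zpow, map_inv, map_zpow] at h
    exact h)
  have h3 := lem1 _ _ _ (by
    have h := hrel _ (Or.inl ⟨(2 : Fin 4), rfl⟩)
    rw [map_mul, map_mul, map_zpow, map_inv, map_zpow] at h
    exact h)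
  have h4 := lem1 _ _ _ (by
    have h := hrel _ (Or.inl ⟨(3 : Fin 4), rfl⟩)
    rw [map_mul, map_mul, map_zpow, map_inv, map_zpow] at h
    exact h)
  have h5 := lem2 _ _ _ (by
    have h := hrel _ (Or.inr ⟨(0 : Fin 4), rfl⟩)
    rw [map_mul, map_mul, map_zpow, map_inv] at h
    exact h)
  have h6 := lem2 _ _ _ (by
    have h := hrel _ (Or.inr ⟨(1 : Fin 4), rfl⟩)
    rw [map_mul, map_mul, map_zpow, map_inv] at h
    exact h)
  have h7 := lem2 _ _ _ (by
    have h := hrel _ (Or.inr ⟨(2 : Fin 4), rfl⟩)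
    rw [map_mul, map_mul, map_zpow, map_inv] at h
    exact h)
  have h8 := lem2 _ _ _ (by
    have h := hrel _ (Or.inr ⟨(3 : Fin 4), rfl⟩)
    rw [map_mul, map_mul, map_zpow, map_inv] at h
    exact h)
  have bzdef : ∀ j : ZMod 8, Additive.ofMul (F (FreeGroup.of j)) = bz j := fun _ => rfl
  simp only [(show ((2 * ((0 : Fin 4) : ℕ) + 1 : ℕ) : ZMod 8) = (1 : ZMod 8) by decide),
    (show ((2 * ((0 : Fin 4) : ℕ) + 2 : ℕ) : ZMod 8) = (2 : ZMod 8) by decide),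
    (show ((2 * ((0 : Fin 4) : ℕ) + 3 : ℕ) : ZMod 8) = (3 : ZMod 8) by decide),
    (show ((2 * ((0 : Fin 4) : ℕ) + 4 : ℕ) : ZMod 8) = (4 : ZMod 8) by decide),
    (show ((2 * ((1 : Fin 4) : ℕ) + 1 : ℕ) : ZMod 8) = (3 : ZMod 8) by decide),
    (show ((2 * ((1 : Fin 4) : ℕ) + 2 : ℕ) : ZMod 8) = (4 : ZMod 8) by decide),
    (show ((2 * ((1 : Fin 4) : ℕ) + 3 : ℕ) : ZMod 8) = (5 : ZMod 8) by decide),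
    (show ((2 * ((1 : Fin 4) : ℕ) + 4 : ℕ) : ZMod 8) = (6 : ZMod 8) by decide),
    (show ((2 * ((2 : Fin 4) : ℕ) + 1 : ℕ) : ZMod 8) = (5 : ZMod 8) by decide),
    (show ((2 * ((2 : Fin 4) : ℕ) + 2 : ℕ) : ZMod 8) = (6 : ZMod 8) by decide),
    (show ((2 * ((2 : Fin 4) : ℕ) + 3 : ℕ) : ZMod 8) = (7 : ZMod 8) by decide),
    (show ((2 * ((2 : Fin 4) : ℕ) + 4 : ℕ) : ZMod 8) = (0 : ZMod 8) by decide),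
    (show ((2 * ((3 : Fin 4) : ℕ) + 1 : ℕ) : ZMod 8) = (7 : ZMod 8) by decide),
    (show ((2 * ((3 : Fin 4) : ℕ) + 2 : ℕ) : ZMod 8) = (0 : ZMod 8) by decide),
    (show ((2 * ((3 : Fin 4) : ℕ) + 3 : ℕ) : ZMod 8) = (1 : ZMod 8) by decide),
    (show ((2 * ((3 : Fin 4) : ℕ) + 4 : ℕ) : ZMod 8) = (2 : ZMod 8) by decide)] at h1 h2 h3 h4 h5 h6 h7 h8
  simp only [bzdef] at h1 h2 h3 h4 h5 h6 h7 h8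
  have K15 : (15 : ℤ) • bz 7 = 0 := by
    linear_combination (norm := module) (6 : ℤ) • h1 + (-6 : ℤ) • h2 + (-9 : ℤ) • h3 + (9 : ℤ) • h4 + (8 : ℤ) • h5 + (2 : ℤ) • h6 + (-7 : ℤ) • h7 + (2 : ℤ) • h8
  have K0 : bz 0 = (9 : ℤ) • bz 7 := by
    linear_combination (norm := module) (-4 : ℤ) • h1 + (2 : ℤ) • h2 + (5 : ℤ) • h3 + (-4 : ℤ) • h4 + (-4 : ℤ) • h5 + (-2 : ℤ) • h6 + (3 : ℤ) • h7
  have K1 : bz 1 = (4 : ℤ) • bz 7 := by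
    linear_combination (norm := module) (-1 : ℤ) • h1 + (2 : ℤ) • h2 + (2 : ℤ) • h3 + (-3 : ℤ) • h4 + (-2 : ℤ) • h5 + (2 : ℤ) • h7 + (-1 : ℤ) • h8
  have K2 : bz 2 = (6 : ℤ) • bz 7 := by
    linear_combination (norm := module) (-1 : ℤ) • h1 + (2 : ℤ) • h2 + (2 : ℤ) • h3 + (-4 : ℤ) • h4 + (-2 : ℤ) • h5 + (2 : ℤ) • h7 + (-2 : ℤ) • h8
  have K3 : bz 3 = (1 : ℤ) • bz 7 := by
    linear_combination (norm := module) (-1 : ℤ) • h1 + (1 : ℤ) • h2 + (1 : ℤ) • h3 + (-1 : ℤ) • h4 + (-1 : ℤ) • h5 + (1 : ℤ) • h7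
  have K4 : bz 4 = (9 : ℤ) • bz 7 := by
    linear_combination (norm := module) (-4 : ℤ) • h1 + (5 : ℤ) • h2 + (5 : ℤ) • h3 + (-7 : ℤ) • h4 + (-6 : ℤ) • h5 + (5 : ℤ) • h7 + (-2 : ℤ) • h8
  have K5 : bz 5 = (4 : ℤ) • bz 7 := by
    linear_combination (norm := module) (-2 : ℤ) • h1 + (1 : ℤ) • h2 + (3 : ℤ) • h3 + (-2 : ℤ) • h4 + (-2 : ℤ) • h5 + (-1 : ℤ) • h6 + (2 : ℤ) • h7
  have K6 : bz 6 = (6 : ℤ) • bz 7 := by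
    linear_combination (norm := module) (-4 : ℤ) • h1 + (2 : ℤ) • h2 + (5 : ℤ) • h3 + (-4 : ℤ) • h4 + (-4 : ℤ) • h5 + (-2 : ℤ) • h6 + (4 : ℤ) • h7
  have K7 : bz 7 = (1 : ℤ) • bz 7 := (one_smul ℤ _).symm
  -- the two homomorphisms
  let φA : A →* Multiplicative (ZMod 15) := Abelianization.lift (PresentedGroup.toGroup hv)
  have hφ : ∀ j : ZMod 8, φA (Abelianization.of (PresentedGroup.of j)) =
      Multiplicative.ofAdd (vv j) := fun j => by
    rw [show (Abelianization.of (PresentedGroup.of j) : A) =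
        Abelianization.of (PresentedGroup.of j) from rfl]
    exact (Abelianization.lift_apply_of _ _).trans (PresentedGroup.toGroup.of hv)
  have h15 : (zmultiplesHom (Additive A)) (bz 7) ((15 : ℕ) : ℤ) = 0 := by
    simpa using K15
  let ψ' : ZMod 15 →+ Additive A := ZMod.lift 15 ⟨(zmultiplesHom (Additive A)) (bz 7), h15⟩
  let ψ : Multiplicative (ZMod 15) →* A := AddMonoidHom.toMultiplicativeLeft ψ'
  have hψ : ∀ m : ℤ, ψ (Multiplicative.ofAdd ((m : ZMod 15))) = Additive.toMul (m • bz 7) := by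
    intro m
    show Additive.toMul (ψ' ((m : ZMod 15))) = Additive.toMul (m • bz 7)
    rw [show ψ' ((m : ZMod 15)) = m • bz 7 from ZMod.lift_coe _ _ _]
  have hli : ∀ a : A, ψ (φA a) = a := by
    have hcomp : ψ.comp φA = MonoidHom.id A := by
      apply Abelianization.hom_ext
      apply PresentedGroup.ext
      intro j
      show ψ (φA (Abelianization.of (PresentedGroup.of j))) = Abelianization.of (PresentedGroup.of j)
      rw [hφ j]
      have hj := (by decide : ∀ j : ZMod 8, j = 0 ∨ j = 1 ∨ j = 2 ∨ j = 3 ∨ j = 4 ∨ j = 5 ∨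
        j = 6 ∨ j = 7) j
      rcases hj with rfl | rfl | rfl | rfl | rfl | rfl | rfl | rfl
      · rw [show vv 0 = ((9 : ℤ) : ZMod 15) from by decide, hψ]
        exact congrArg Additive.toMul K0.symm
      · rw [show vv 1 = ((4 : ℤ) : ZMod 15) from by decide, hψ]
        exact congrArg Additive.toMul K1.symm
      · rw [show vv 2 = ((6 : ℤ) : ZMod 15) from by decide, hψ]
        exact congrArg Additive.toMul K2.symm
      · rw [show vv 3 = ((1 : ℤ) : ZMod 15) from by decide, hψ]
        exact congrArg Additive.toMul K3.symm
      · rw [show vv 4 = ((9 : ℤ) : ZMod 15) from by decide, hψ]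
        exact congrArg Additive.toMul K4.symm
      · rw [show vv 5 = ((4 : ℤ) : ZMod 15) from by decide, hψ]
        exact congrArg Additive.toMul K5.symm
      · rw [show vv 6 = ((6 : ℤ) : ZMod 15) from by decide, hψ]
        exact congrArg Additive.toMul K6.symm
      · rw [show vv 7 = ((1 : ℤ) : ZMod 15) from by decide, hψ]
        exact congrArg Additive.toMul K7.symm
    intro a
    exact DFunLike.congr_fun hcomp a
  have hri : ∀ z : Multiplicative (ZMod 15), φA (ψ z) = z := by
    intro z
    have hz : z = Multiplicative.ofAdd (((z.toAdd.val : ℤ) : ZMod 15)) := by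
      rw [Int.cast_natCast, ZMod.natCast_rightInverse z.toAdd]
      exact (ofAdd_toAdd z).symm
    rw [hz, hψ, toMul_zsmul, map_zpow,
      show Additive.toMul (bz 7) = Abelianization.of (PresentedGroup.of (7 : ZMod 8)) from rfl,
      hφ, show vv 7 = (1 : ZMod 15) from by decide, ← ofAdd_zsmul]
    norm_num
  let e : A ≃ Multiplicative (ZMod 15) := ⟨φA, ψ, hli, hri⟩
  let e2 : A ≃ ZMod 15 := e.trans Multiplicative.toAdd
  constructor
  · exact Finite.of_equiv _ e2.symm
  · rw [Nat.card_congr e2, Nat.card_zmod]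

/-- |H₁(M₄(3/2,1))| = 15: the abelianization of the geometric presentation with
n = 4, p = 3, q = 2, r = 1, s = 1 is finite of order 15. -/
theorem stmt_9 :
    let c : ℕ → ZMod 8 := Nat.cast
    let x : ZMod 8 → FreeGroup (ZMod 8) := FreeGroup.of
    let rels : Set (FreeGroup (ZMod 8)) :=
      (Set.range fun i : Fin 4 =>
        (x (c (2 * (i : ℕ) + 1))) ^ (2 : ℤ) * (x (c (2 * (i : ℕ) + 2)))⁻¹ *
          (x (c (2 * (i : ℕ) + 3))) ^ (-2 : ℤ)) ∪
      (Set.range fun i : Fin 4 =>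
        x (c (2 * (i : ℕ) + 2)) * (x (c (2 * (i : ℕ) + 3))) ^ (3 : ℤ) *
          (x (c (2 * (i : ℕ) + 4)))⁻¹)
    Finite (Abelianization (PresentedGroup rels)) ∧
      Nat.card (Abelianization (PresentedGroup rels)) = 15 := by
  intro c x rels
  exact aux
end

section
/- Let n ≥ 1. The abelianization of the group presented by generators z_1, ..., z_n and relators z_{i-1} z_{i+1} z_i^{-1} for i = 1, ..., n (subscripts mod n) is isomorphic to the cokernel of the circulant matrix with first row (-1, 1, 0, ..., 0, 1), and its order, when finite, equals |∏_{k=0}^{n-1} (ω^k + ω^{-k} - 1)| where ω = exp(2πi/n); in particular, this product equals |Res(t^2 - t + 1, t^n - 1)|. -/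
set_option linter.unusedSectionVars false

namespace S12
variable (n : ℕ) [NeZero n]

abbrev cF : ZMod n → ℤ := fun k =>
  (if k = 0 then (-1 : ℤ) else 0) + (if k = 1 then 1 else 0) + (if k = -1 then 1 else 0)

lemma col (i : ZMod n) :
    (Matrix.circulant (cF n)).mulVec (Pi.single i 1) =
      Pi.single (i - 1) 1 + Pi.single (i + 1) 1 - Pi.single i 1 := by
  funext j
  rw [Matrix.mulVec_single_one]
  simp only [Matrix.col_apply, Matrix.circulant_apply, Pi.add_apply, Pi.sub_apply, Pi.single_apply, mul_one, cF]
  have h0 : j - i = 0 ↔ j = i := sub_eq_zero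
  have h1 : j - i = 1 ↔ j = i + 1 := sub_eq_iff_eq_add'
  have h2 : j - i = -1 ↔ j = i - 1 := by
    rw [sub_eq_iff_eq_add']; constructor <;> intro h <;> rw [h] <;> ring
  rw [if_congr h0 rfl rfl, if_congr h1 rfl rfl, if_congr h2 rfl rfl]
  split_ifs <;> ring

abbrev relsF : Set (FreeGroup (ZMod n)) :=
  Set.range fun i : ZMod n =>
    FreeGroup.of (i - 1) * FreeGroup.of (i + 1) * (FreeGroup.of i)⁻¹

abbrev NF : Submodule ℤ (ZMod n → ℤ) := LinearMap.range (Matrix.circulant (cF n)).mulVecLin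

abbrev QF := (ZMod n → ℤ) ⧸ NF n

abbrev GF := PresentedGroup (relsF n)

noncomputable def f0 : ZMod n → Multiplicative (QF n) := fun i =>
  Multiplicative.ofAdd (Submodule.Quotient.mk (Pi.single i 1))

lemma hrel : ∀ r ∈ relsF n, FreeGroup.lift (f0 n) r = 1 := by
  rintro r ⟨i, rfl⟩
  simp only [map_mul, map_inv, FreeGroup.lift_apply_of, f0, ← ofAdd_add, ← ofAdd_neg, ofAdd_eq_one]
  rw [← sub_eq_add_neg, ← Submodule.Quotient.mk_add, ← Submodule.Quotient.mk_sub,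
    Submodule.Quotient.mk_eq_zero]
  exact ⟨Pi.single i 1, col n i⟩

noncomputable def φ : Additive (Abelianization (GF n)) →+ QF n :=
  MonoidHom.toAdditiveLeft (Abelianization.lift (PresentedGroup.toGroup (hrel n)))

noncomputable def aF : ZMod n → Additive (Abelianization (GF n)) := fun i =>
  Additive.ofMul (Abelianization.of (PresentedGroup.of i))

noncomputable def ψ0 : (ZMod n → ℤ) →ₗ[ℤ] Additive (Abelianization (GF n)) :=
  (Pi.basisFun ℤ (ZMod n)).constr ℤ (aF n)

lemma pg_rel (i : ZMod n) :
    (PresentedGroup.of (rels := relsF n) (i - 1)) * PresentedGroup.of (i + 1) *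
      (PresentedGroup.of i)⁻¹ = 1 := by
  have : PresentedGroup.mk (relsF n)
      (FreeGroup.of (i - 1) * FreeGroup.of (i + 1) * (FreeGroup.of i)⁻¹) = 1 := by
    refine (QuotientGroup.eq_one_iff _).mpr ?_
    exact Subgroup.subset_normalClosure ⟨i, rfl⟩
  simp only [map_mul, map_inv] at this
  exact this

lemma aF_rel (i : ZMod n) : aF n (i - 1) + aF n (i + 1) - aF n i = 0 := by
  have := congrArg Abelianization.of (pg_rel n i)
  simp only [map_mul, map_inv, map_one, sub_eq_add_neg] at this
  simp only [aF, sub_eq_add_neg, ← ofMul_inv, ← ofMul_mul, this, ofMul_one]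

lemma psi0_single (i : ZMod n) : ψ0 n (Pi.single i 1) = aF n i := by
  rw [show (Pi.single i 1 : ZMod n → ℤ) = Pi.basisFun ℤ (ZMod n) i from
    (Pi.basisFun_apply ℤ (ZMod n) i).symm]
  exact Module.Basis.constr_basis _ _ _ _

lemma hker : NF n ≤ LinearMap.ker (ψ0 n) := by
  have hcomp : (ψ0 n) ∘ₗ (Matrix.circulant (cF n)).mulVecLin = 0 := by
    apply (Pi.basisFun ℤ (ZMod n)).ext
    intro i
    rw [LinearMap.comp_apply, Pi.basisFun_apply, Matrix.mulVecLin_apply, col,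
      map_sub, map_add, psi0_single, psi0_single, psi0_single, LinearMap.zero_apply]
    exact aF_rel n i
  rintro _ ⟨y, rfl⟩
  rw [LinearMap.mem_ker, ← LinearMap.comp_apply, hcomp, LinearMap.zero_apply]

noncomputable def ψ : QF n →ₗ[ℤ] Additive (Abelianization (GF n)) :=
  Submodule.liftQ _ (ψ0 n) (hker n)

end S12

namespace S12b
open S12
variable (n : ℕ) [NeZero n]

lemma psi_mk (x : ZMod n → ℤ) : ψ n (Submodule.Quotient.mk x) = ψ0 n x :=
  Submodule.liftQ_apply _ _ _

lemma phi_aF (i : ZMod n) : φ n (aF n i) = Submodule.Quotient.mk (Pi.single i 1) := by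
  show (MonoidHom.toAdditiveLeft (Abelianization.lift (PresentedGroup.toGroup (hrel n)))) (aF n i) = _
  rw [MonoidHom.coe_toAdditiveLeft]
  show Multiplicative.toAdd ((Abelianization.lift (PresentedGroup.toGroup (hrel n)))
    (Abelianization.of (PresentedGroup.of i))) = _
  rw [Abelianization.lift_apply_of, PresentedGroup.toGroup.of]
  rfl

lemma comp1 : (φ n).toIntLinearMap ∘ₗ ψ n = LinearMap.id := by
  apply Submodule.linearMap_qext
  apply (Pi.basisFun ℤ (ZMod n)).ext
  intro i
  simp only [LinearMap.comp_apply, Pi.basisFun_apply, Submodule.mkQ_apply, LinearMap.id_apply]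
  rw [psi_mk, psi0_single]
  exact phi_aF n i

lemma comp1' (x : QF n) : φ n ((ψ n) x) = x := by
  simpa using LinearMap.congr_fun (comp1 n) x

lemma comp2 : (ψ n).toAddMonoidHom.comp (φ n) = AddMonoidHom.id _ := by
  apply MonoidHom.toAdditive.symm.injective
  apply Abelianization.hom_ext
  apply PresentedGroup.ext
  intro i
  simp only [MonoidHom.comp_apply, MonoidHom.toAdditive_symm_apply_apply,
    AddMonoidHom.comp_apply, AddMonoidHom.id_apply]
  show Additive.toMul ((ψ n) ((φ n)
      (Additive.ofMul (Abelianization.of (PresentedGroup.of i))))) = _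
  rw [show (Additive.ofMul (Abelianization.of (PresentedGroup.of i))) = aF n i from rfl,
    phi_aF, psi_mk, psi0_single]

lemma comp2' (x : Additive (Abelianization (GF n))) : ψ n (φ n x) = x := by
  simpa using DFunLike.congr_fun (comp2 n) x

noncomputable def eqv : Additive (Abelianization (GF n)) ≃+ QF n where
  toFun := φ n
  invFun := ψ n
  left_inv := comp2' n
  right_inv := comp1' n
  map_add' := (φ n).map_add

end S12b


open Matrix in
lemma card_quot {ι : Type} [Fintype ι] [DecidableEq ι] (A : Matrix ι ι ℤ)
    (hf : Finite ((ι → ℤ) ⧸ LinearMap.range A.mulVecLin)) :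
    Nat.card ((ι → ℤ) ⧸ LinearMap.range A.mulVecLin) = A.det.natAbs := by
  set N := LinearMap.range A.mulVecLin with hN
  have hNi : N.toAddSubgroup.index = Nat.card ((ι → ℤ) ⧸ N) := rfl
  have hcard : Nat.card ((ι → ℤ) ⧸ N) ≠ 0 := Nat.card_ne_zero.mpr ⟨⟨0⟩, hf⟩
  obtain ⟨m, snf⟩ := N.smithNormalForm (Pi.basisFun ℤ ι)
  have hne : N.toAddSubgroup.index ≠ 0 := by rw [hNi]; exact hcard
  have hm : m = Fintype.card ι := snf.toAddSubgroup_index_ne_zero_iff.mp hne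
  have hidx : N.toAddSubgroup.index = ∏ i : Fin m, (snf.a i).natAbs := by
    rw [snf.toAddSubgroup_index_eq_ite, if_pos hm]
    congr 1; funext i
    rw [Ideal.span_singleton_toAddSubgroup_eq_zmultiples, Int.index_zmultiples]
  -- injectivity
  obtain ⟨bM, bN, f, a, hsnf⟩ := snf
  have hfb : Function.Bijective f :=
    (Fintype.bijective_iff_injective_and_card f).mpr ⟨f.injective, by simp [hm]⟩
  let e0 : Fin m ≃ ι := Equiv.ofBijective f hfb
  let bN' : Module.Basis ι ℤ N := bN.reindex e0
  have hbN' : ∀ j : ι, (bN' j : ι → ℤ) = a (e0.symm j) • bM j := by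
    intro j
    rw [show bN' j = bN (e0.symm j) from Module.Basis.reindex_apply .., hsnf]
    congr 1
    exact congrArg bM (e0.apply_symm_apply j)
  have hInj : Function.Injective A.mulVecLin := by
    have hsurj : Function.Surjective
        ((bN'.equivFun.toLinearMap.comp (A.mulVecLin.rangeRestrict))) :=
      bN'.equivFun.surjective.comp A.mulVecLin.surjective_rangeRestrict
    have := OrzechProperty.injective_of_surjective_endomorphism _ hsurj
    intro x y hxy
    apply this
    simp only [LinearMap.comp_apply]
    congr 1
    exact Subtype.ext hxy
  let e : (ι → ℤ) ≃ₗ[ℤ] N := LinearEquiv.ofInjective A.mulVecLin hInj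
  let bpre : Module.Basis ι ℤ (ι → ℤ) := bN'.map e.symm
  have hg : ∀ j : ι, A.mulVecLin (bpre j) = (bN' j : ι → ℤ) := by
    intro j
    show A.mulVecLin (e.symm (bN' j)) = _
    have h1 : (e (e.symm (bN' j)) : ι → ℤ) = A.mulVecLin (e.symm (bN' j)) :=
      LinearEquiv.ofInjective_apply _ _
    rw [← h1, e.apply_symm_apply]
  have hT : LinearMap.toMatrix bpre bM A.mulVecLin
      = Matrix.diagonal (fun j => a (e0.symm j)) := by
    ext i j
    rw [LinearMap.toMatrix_apply, hg, hbN', Matrix.diagonal_apply]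
    simp only [_root_.map_smul, Module.Basis.repr_self, Finsupp.smul_single, smul_eq_mul, mul_one,
      Finsupp.single_apply]
    split_ifs with h h' h' <;> simp_all
  have hcomp : LinearMap.toMatrix bpre bM A.mulVecLin
      = LinearMap.toMatrix bM bM A.mulVecLin * LinearMap.toMatrix bpre bM LinearMap.id := by
    rw [← LinearMap.toMatrix_comp, LinearMap.comp_id]
  have hdetA : (LinearMap.toMatrix bM bM A.mulVecLin).det = A.det := by
    rw [LinearMap.det_toMatrix, ← LinearMap.det_toMatrix' ]
    congr 1
    rw [← Matrix.toLin'_apply', LinearMap.toMatrix'_toLin']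
  have hu : IsUnit (LinearMap.toMatrix bpre bM (LinearMap.id (R := ℤ) (M := ι → ℤ))).det := by
    have : (LinearEquiv.refl ℤ (ι → ℤ) : (ι → ℤ) →ₗ[ℤ] (ι → ℤ)) = LinearMap.id := rfl
    rw [← this]
    exact LinearEquiv.isUnit_det (LinearEquiv.refl ℤ (ι → ℤ)) bpre bM
  have hun : (LinearMap.toMatrix bpre bM (LinearMap.id (R := ℤ) (M := ι → ℤ))).det.natAbs = 1 :=
    Int.isUnit_iff.mp hu |>.elim (fun h => by rw [h]; rfl) (fun h => by rw [h]; rfl)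
  have hdet : (∏ j : ι, a (e0.symm j)).natAbs = A.det.natAbs := by
    have := congrArg Matrix.det hcomp
    rw [hT, Matrix.det_diagonal, Matrix.det_mul, hdetA] at this
    rw [this, Int.natAbs_mul, hun, mul_one]
  rw [← hNi, hidx, ← hdet]
  have habs : (∏ j : ι, a (e0.symm j)).natAbs = ∏ j : ι, (a (e0.symm j)).natAbs :=
    map_prod Int.natAbsHom _ Finset.univ
  rw [habs]
  exact (Equiv.prod_comp e0.symm fun i => (a i).natAbs).symm


namespace S12c
open S12
variable (n : ℕ) [NeZero n]

noncomputable abbrev ω : ℂ := Complex.exp (2 * Real.pi * Complex.I / n)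

lemma hprim : IsPrimitiveRoot (ω n) n := Complex.isPrimitiveRoot_exp n (NeZero.ne n)

lemma hω1 : ω n ^ n = 1 := (hprim n).pow_eq_one

noncomputable def χ : ZMod n → ℂ := fun a => ω n ^ a.val

lemma χ_add (a b : ZMod n) : χ n (a + b) = χ n a * χ n b := by
  unfold χ
  rw [ZMod.val_add, ← pow_eq_pow_mod _ (hω1 n), pow_add]

lemma χ_zero : χ n 0 = 1 := by
  unfold χ; rw [ZMod.val_zero, pow_zero]

lemma χ_ne_zero (a : ZMod n) : χ n a ≠ 0 := pow_ne_zero _ (Complex.exp_ne_zero _)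

lemma χ_neg (a : ZMod n) : χ n (-a) = (χ n a)⁻¹ := by
  have h : χ n a * χ n (-a) = 1 := by rw [← χ_add, add_neg_cancel, χ_zero]
  field_simp [χ_ne_zero] at h ⊢
  linear_combination h

lemma χ_mul_val (j k : ZMod n) : χ n (j * k) = χ n j ^ k.val := by
  unfold χ
  rw [ZMod.val_mul, ← pow_eq_pow_mod _ (hω1 n), pow_mul]

noncomputable def WM : Matrix (ZMod n) (ZMod n) ℂ := Matrix.of fun j k => χ n (j * k)

noncomputable def lam : ZMod n → ℂ := fun k => χ n k + (χ n k)⁻¹ - 1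

lemma key : ((Matrix.circulant (cF n)).map (Int.cast : ℤ → ℂ)) * WM n
    = WM n * Matrix.diagonal (lam n) := by
  ext j k
  rw [Matrix.mul_apply, Matrix.mul_diagonal]
  have h1 : ∀ i : ZMod n, ((Matrix.circulant (cF n)).map (Int.cast : ℤ → ℂ)) j i * WM n i k
      = ((cF n (j - i) : ℂ)) * (χ n (j * k) * (χ n ((j - i) * k))⁻¹) := by
    intro i
    rw [Matrix.map_apply, Matrix.circulant_apply]
    unfold WM
    congr 1
    rw [Matrix.of_apply, show i * k = j * k + -((j - i) * k) by ring, χ_add, χ_neg]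
  rw [Finset.sum_congr rfl fun i _ => h1 i]
  rw [← Equiv.sum_comp (Equiv.subLeft j) fun m => (cF n (j - m) : ℂ) * (χ n (j * k) * (χ n ((j - m) * k))⁻¹)]
  simp only [Equiv.subLeft_apply, sub_sub_cancel]
  have h2 : ∑ m : ZMod n, (cF n m : ℂ) * (χ n (m * k))⁻¹ = lam n k := by
    have hterm : ∀ m : ZMod n, (cF n m : ℂ) * (χ n (m * k))⁻¹ =
        (if m = 0 then -(χ n (m * k))⁻¹ else 0) + (if m = 1 then (χ n (m * k))⁻¹ else 0)
          + (if m = -1 then (χ n (m * k))⁻¹ else 0) := by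
      intro m
      push_cast
      split_ifs <;> ring
    rw [Finset.sum_congr rfl fun m _ => hterm m]
    rw [Finset.sum_add_distrib, Finset.sum_add_distrib, Finset.sum_ite_eq' Finset.univ (0 : ZMod n),
      Finset.sum_ite_eq' Finset.univ (1 : ZMod n), Finset.sum_ite_eq' Finset.univ (-1 : ZMod n)]
    simp only [Finset.mem_univ, if_true, zero_mul, one_mul, neg_one_mul, χ_zero, χ_neg, inv_inv,
      inv_one]
    unfold lam
    ring
  calc ∑ m : ZMod n, (cF n m : ℂ) * (χ n (j * k) * (χ n (m * k))⁻¹)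
      = χ n (j * k) * ∑ m : ZMod n, (cF n m : ℂ) * (χ n (m * k))⁻¹ := by
        rw [Finset.mul_sum]; exact Finset.sum_congr rfl fun m _ => by ring
    _ = WM n j k * lam n k := by rw [h2]; rfl

end S12c

namespace S12d
open S12 S12c
variable (n : ℕ) [NeZero n]

def e1 : Fin n ≃ ZMod n where
  toFun i := ((i : ℕ) : ZMod n)
  invFun a := ⟨a.val, a.val_lt⟩
  left_inv i := Fin.ext (ZMod.val_cast_of_lt i.isLt)
  right_inv a := ZMod.natCast_rightInverse a

lemma e1_val (i : Fin n) : (e1 n i : ZMod n).val = (i : ℕ) := ZMod.val_cast_of_lt i.isLt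

lemma subW : (WM n).submatrix (e1 n) (e1 n)
    = Matrix.vandermonde (fun i : Fin n => ω n ^ (i : ℕ)) := by
  ext i j
  rw [Matrix.submatrix_apply, Matrix.vandermonde_apply]
  show χ n (e1 n i * e1 n j) = _
  rw [χ_mul_val, e1_val]
  show (ω n ^ (e1 n i : ZMod n).val) ^ (j : ℕ) = _
  rw [e1_val]

lemma detW_ne : (WM n).det ≠ 0 := by
  rw [← Matrix.det_submatrix_equiv_self (e1 n), subW, Matrix.det_vandermonde]
  rw [Finset.prod_ne_zero_iff]
  intro i _
  rw [Finset.prod_ne_zero_iff]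
  intro j hj
  apply sub_ne_zero_of_ne
  intro h
  have := (hprim n).pow_inj j.isLt i.isLt h
  rw [Finset.mem_Ioi] at hj
  exact absurd (Fin.ext this) (ne_of_gt hj)

lemma det_eq : (((Matrix.circulant (cF n)).det : ℤ) : ℂ) = ∏ k : ZMod n, lam n k := by
  have h := congrArg Matrix.det (key n)
  rw [Matrix.det_mul, Matrix.det_mul, Matrix.det_diagonal,
    mul_comm ((WM n).det) (∏ k : ZMod n, lam n k)] at h
  have h2 := mul_right_cancel₀ (detW_ne n) h
  rw [← h2]
  exact RingHom.map_det (Int.castRingHom ℂ) _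

lemma prod_eq : ∏ k ∈ Finset.range n, (ω n ^ k + ω n ^ (-(k : ℤ)) - 1)
    = ∏ k : ZMod n, lam n k := by
  rw [← Equiv.prod_comp (e1 n) (lam n),
    ← Fin.prod_univ_eq_prod_range (fun k => ω n ^ k + ω n ^ (-(k : ℤ)) - 1) n]
  apply Finset.prod_congr rfl
  intro i _
  show _ = lam n (e1 n i)
  unfold lam χ
  rw [e1_val, zpow_neg, zpow_natCast]

lemma abs_ωk (k : ℕ) : ‖ω n ^ k‖ = 1 := by
  have h1 : ‖ω n‖ ^ n = 1 := by
    rw [← norm_pow, hω1, norm_one]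
  have h2 : ‖ω n‖ = 1 := by
    rcases lt_trichotomy (‖ω n‖) 1 with h | h | h
    · have := pow_lt_one₀ (norm_nonneg _) h (NeZero.ne n)
      rw [h1] at this
      linarith
    · exact h
    · have := one_lt_pow₀ h (NeZero.ne n)
      rw [h1] at this
      linarith
  rw [norm_pow, h2, one_pow]

lemma part3 : ‖∏ k ∈ Finset.range n, (ω n ^ k + ω n ^ (-(k : ℤ)) - 1)‖ =
    ‖∏ k ∈ Finset.range n, ((ω n ^ k) ^ 2 - ω n ^ k + 1)‖ := by
  rw [norm_prod, norm_prod]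
  apply Finset.prod_congr rfl
  intro k _
  have h0 : ω n ^ k ≠ 0 := pow_ne_zero _ (Complex.exp_ne_zero _)
  have key : (ω n ^ k) ^ 2 - ω n ^ k + 1 = ω n ^ k * (ω n ^ k + ω n ^ (-(k : ℤ)) - 1) := by
    rw [zpow_neg, zpow_natCast]
    field_simp
    ring
  rw [key, norm_mul, abs_ωk, one_mul]

end S12d


/-- H₁ of the Sieradski manifolds: the abelianization of the Sieradski group is the
cokernel of the circulant matrix with first row (-1, 1, 0, ..., 0, 1); when finite,
its order is |∏ₖ (ωᵏ + ω⁻ᵏ - 1)|, which equals |Res(t² - t + 1, tⁿ - 1)|. -/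
theorem stmt_12 (n : ℕ) (hn : 1 ≤ n) :
    haveI : NeZero n := ⟨by omega⟩
    let rels : Set (FreeGroup (ZMod n)) :=
      Set.range fun i : ZMod n =>
        FreeGroup.of (i - 1) * FreeGroup.of (i + 1) * (FreeGroup.of i)⁻¹
    let M : Matrix (ZMod n) (ZMod n) ℤ :=
      Matrix.circulant fun k : ZMod n =>
        (if k = 0 then (-1 : ℤ) else 0) + (if k = 1 then 1 else 0) + (if k = -1 then 1 else 0)
    let ω : ℂ := Complex.exp (2 * Real.pi * Complex.I / n)
    Nonempty (Additive (Abelianization (PresentedGroup rels)) ≃+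
        ((ZMod n → ℤ) ⧸ LinearMap.range M.mulVecLin)) ∧
      (Finite (Abelianization (PresentedGroup rels)) →
        (Nat.card (Abelianization (PresentedGroup rels)) : ℝ) =
          ‖∏ k ∈ Finset.range n, (ω ^ k + ω ^ (-(k : ℤ)) - 1)‖) ∧
      ‖∏ k ∈ Finset.range n, (ω ^ k + ω ^ (-(k : ℤ)) - 1)‖ =
        ‖∏ k ∈ Finset.range n, ((ω ^ k) ^ 2 - ω ^ k + 1)‖ := by
  haveI : NeZero n := ⟨by omega⟩
  refine ⟨⟨S12b.eqv n⟩, ?_, S12d.part3 n⟩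
  intro hfin
  have e := S12b.eqv n
  have heq : Abelianization (S12.GF n) ≃ S12.QF n := Additive.ofMul.trans e.toEquiv
  have hfinQ : Finite (S12.QF n) := Finite.of_equiv _ heq
  have hcard : Nat.card (Abelianization (S12.GF n)) = Nat.card (S12.QF n) := Nat.card_congr heq
  have hc2 := card_quot (Matrix.circulant (S12.cF n)) hfinQ
  show ((Nat.card (Abelianization (S12.GF n)) : ℕ) : ℝ) = _
  rw [hcard, hc2, S12d.prod_eq n, ← S12d.det_eq n, Complex.norm_intCast, Nat.cast_natAbs, Int.cast_abs]
end

section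
/- For n = 1, the group presented by generators x_1, x_2 and relators x_1^q x_2^{-r} x_1^{-q} and x_2^s x_1^p x_2^{-s} (with gcd(p,q)=gcd(r,s)=1) is isomorphic to the free product Z/p * Z/r (where Z/0 = Z and Z/1 = 1). -/
private def zmodHomAux {n : ℤ} {G : Type*} [Group G] (g : G) (h : g ^ n = 1) :
    Multiplicative (ZMod n.natAbs) →* G :=
  AddMonoidHom.toMultiplicativeLeft
    (ZMod.lift n.natAbs ⟨zmultiplesHom (Additive G) (Additive.ofMul g), by
      show ((n.natAbs : ℤ) • Additive.ofMul g) = 0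
      have : g ^ ((n.natAbs : ℤ)) = 1 := by
        rcases Int.natAbs_eq n with he | he
        · rw [← he]; exact h
        · rw [show ((n.natAbs : ℤ)) = -n by omega, zpow_neg, h, inv_one]
      simpa [← ofMul_zpow] using this⟩)

private lemma zmodHomAux_intCast {n : ℤ} {G : Type*} [Group G] (g : G) (h : g ^ n = 1) (k : ℤ) :
    zmodHomAux g h (Multiplicative.ofAdd ((k : ZMod n.natAbs))) = g ^ k := by
  have := ZMod.lift_coe n.natAbs
    ⟨zmultiplesHom (Additive G) (Additive.ofMul g), by
      have : g ^ ((n.natAbs : ℤ)) = 1 := by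
        rcases Int.natAbs_eq n with he | he
        · rw [← he]; exact h
        · rw [show ((n.natAbs : ℤ)) = -n by omega, zpow_neg, h, inv_one]
      simpa [← ofMul_zpow] using this⟩ k
  exact (congrArg Additive.toMul this).trans (by simp)

private lemma zmodHomExt {n : ℕ} {G : Type*} [Group G]
    {f g : Multiplicative (ZMod n) →* G}
    (h : f (Multiplicative.ofAdd 1) = g (Multiplicative.ofAdd 1)) : f = g := by
  refine MonoidHom.ext fun x => ?_
  obtain ⟨k, hk⟩ := ZMod.intCast_surjective (Multiplicative.toAdd x)
  have hx : x = (Multiplicative.ofAdd (1 : ZMod n)) ^ k := by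
    rw [← ofAdd_zsmul, zsmul_one, hk]; simp
  rw [hx, map_zpow, map_zpow, h]

/-- π₁(M₁(p/q, r/s)) ≅ ℤ/p * ℤ/r: the group ⟨x₁, x₂ | x₁^q x₂^{-r} x₁^{-q}, x₂^s x₁^p x₂^{-s}⟩
is the free product of cyclic groups of orders |p| and |r| (with ℤ/0 = ℤ). -/
theorem stmt_15 (p q r s : ℤ) (hpq : Int.gcd p q = 1) (hrs : Int.gcd r s = 1) :
    let x : Fin 2 → FreeGroup (Fin 2) := FreeGroup.of
    let rels : Set (FreeGroup (Fin 2)) :=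
      { (x 0) ^ q * (x 1) ^ (-r) * (x 0) ^ (-q), (x 1) ^ s * (x 0) ^ p * (x 1) ^ (-s) }
    Nonempty (PresentedGroup rels ≃*
      Monoid.Coprod (Multiplicative (ZMod p.natAbs)) (Multiplicative (ZMod r.natAbs))) := by
  intro x rels
  set C := Monoid.Coprod (Multiplicative (ZMod p.natAbs)) (Multiplicative (ZMod r.natAbs))
  set X0 : PresentedGroup rels := PresentedGroup.of 0
  set X1 : PresentedGroup rels := PresentedGroup.of 1
  -- relations in the presented group
  have hmk : ∀ i : Fin 2, PresentedGroup.mk rels (x i) = PresentedGroup.of i := fun _ => rfl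
  have hrel2 : X1 ^ s * X0 ^ p * X1 ^ (-s) = 1 := by
    have hmem : (x 1) ^ s * (x 0) ^ p * (x 1) ^ (-s) ∈ Subgroup.normalClosure rels :=
      Subgroup.subset_normalClosure (by right; rfl)
    have h1 : PresentedGroup.mk rels ((x 1) ^ s * (x 0) ^ p * (x 1) ^ (-s)) = 1 :=
      (QuotientGroup.eq_one_iff _).mpr hmem
    simpa [map_mul, map_zpow, hmk] using h1
  have hrel1 : X0 ^ q * X1 ^ (-r) * X0 ^ (-q) = 1 := by
    have hmem : (x 0) ^ q * (x 1) ^ (-r) * (x 0) ^ (-q) ∈ Subgroup.normalClosure rels :=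
      Subgroup.subset_normalClosure (by left; rfl)
    have h1 : PresentedGroup.mk rels ((x 0) ^ q * (x 1) ^ (-r) * (x 0) ^ (-q)) = 1 :=
      (QuotientGroup.eq_one_iff _).mpr hmem
    simpa [map_mul, map_zpow, hmk] using h1
  have hX0 : X0 ^ p = 1 := by
    have h2 : X0 ^ p = X1 ^ (-s) * (X1 ^ s * X0 ^ p * X1 ^ (-s)) * X1 ^ s := by group
    rw [hrel2, mul_one] at h2
    rw [h2]; group
  have hX1 : X1 ^ r = 1 := by
    have h2 : X1 ^ (-r) = X0 ^ (-q) * (X0 ^ q * X1 ^ (-r) * X0 ^ (-q)) * X0 ^ q := by group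
    rw [hrel1, mul_one] at h2
    have : X1 ^ (-r) = 1 := by rw [h2]; group
    rw [zpow_neg, inv_eq_one] at this
    exact this
  -- generators of the coprod
  set a : C := Monoid.Coprod.inl (Multiplicative.ofAdd 1)
  set b : C := Monoid.Coprod.inr (Multiplicative.ofAdd 1)
  have ha : a ^ p = 1 := by
    have : ((p : ℤ) : ZMod p.natAbs) = 0 :=
      (ZMod.intCast_zmod_eq_zero_iff_dvd p p.natAbs).mpr (Int.natAbs_dvd.mpr dvd_rfl)
    calc a ^ p = Monoid.Coprod.inl ((Multiplicative.ofAdd (1 : ZMod p.natAbs)) ^ p) := by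
          rw [map_zpow]
      _ = 1 := by rw [← ofAdd_zsmul, zsmul_one, this]; simp
  have hb : b ^ r = 1 := by
    have : ((r : ℤ) : ZMod r.natAbs) = 0 :=
      (ZMod.intCast_zmod_eq_zero_iff_dvd r r.natAbs).mpr (Int.natAbs_dvd.mpr dvd_rfl)
    calc b ^ r = Monoid.Coprod.inr ((Multiplicative.ofAdd (1 : ZMod r.natAbs)) ^ r) := by
          rw [map_zpow]
      _ = 1 := by rw [← ofAdd_zsmul, zsmul_one, this]; simp
  -- forward homomorphism
  have hrels : ∀ w ∈ rels, FreeGroup.lift (![a, b] : Fin 2 → C) w = 1 := by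
    intro w hw
    rcases hw with h | h <;> subst h <;>
      simp only [map_mul, map_zpow, FreeGroup.lift_apply_of, x, Matrix.cons_val_zero,
        Matrix.cons_val_one, Matrix.head_cons]
    · have hb' : b ^ (-r) = 1 := by rw [zpow_neg, hb, inv_one]
      rw [hb']; group
    · have ha' : a ^ p = 1 := ha
      rw [ha']; group
  set F : PresentedGroup rels →* C := PresentedGroup.toGroup hrels
  -- backward homomorphism
  set φ : Multiplicative (ZMod p.natAbs) →* PresentedGroup rels := zmodHomAux X0 hX0
  set ψ : Multiplicative (ZMod r.natAbs) →* PresentedGroup rels := zmodHomAux X1 hX1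
  set B : C →* PresentedGroup rels := Monoid.Coprod.lift φ ψ
  have hφ1 : φ (Multiplicative.ofAdd 1) = X0 := by
    have := zmodHomAux_intCast X0 hX0 1
    simpa using this
  have hψ1 : ψ (Multiplicative.ofAdd 1) = X1 := by
    have := zmodHomAux_intCast X1 hX1 1
    simpa using this
  have hF : ∀ i : Fin 2, F (PresentedGroup.of i) = (![a, b] : Fin 2 → C) i := fun i =>
    PresentedGroup.toGroup.of hrels
  have h0 : (B.comp F) (PresentedGroup.of (0 : Fin 2)) = PresentedGroup.of (0 : Fin 2) := by
    simp only [MonoidHom.comp_apply, hF 0, Matrix.cons_val_zero]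
    exact (Monoid.Coprod.lift_apply_inl φ ψ _).trans hφ1
  have h1 : (B.comp F) (PresentedGroup.of (1 : Fin 2)) = PresentedGroup.of (1 : Fin 2) := by
    simp only [MonoidHom.comp_apply, hF 1, Matrix.cons_val_one, Matrix.head_cons]
    exact (Monoid.Coprod.lift_apply_inr φ ψ _).trans hψ1
  have hBF : B.comp F = MonoidHom.id _ := by
    apply PresentedGroup.ext
    intro i
    fin_cases i
    · exact h0
    · exact h1
  have hFB : F.comp B = MonoidHom.id _ := by
    apply Monoid.Coprod.hom_ext
    · apply zmodHomExt
      simp only [MonoidHom.comp_apply, MonoidHom.id_apply, B, Monoid.Coprod.lift_apply_inl, hφ1]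
      rw [show F X0 = a from hF 0]
      rfl
    · apply zmodHomExt
      simp only [MonoidHom.comp_apply, MonoidHom.id_apply, B, Monoid.Coprod.lift_apply_inr, hψ1]
      rw [show F X1 = b from hF 1]
      rfl
  exact ⟨MonoidHom.toMulEquiv F B hBF hFB⟩
end
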